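/- Let B = {1,...,n₁} × ... × {1,...,n_k} and π : ℤ^k → ℤ^{k−1} the projection away from the first coordinate. For A' ⊆ B and i ≥ 1, define E_i = {x ∈ π(A') : |π^{-1}(x) ∩ A'| ≥ i} and F_i = {x ∈ π(A'+A') : |π^{-1}(x) ∩ (A'+A')| ≥ i}. Then |A'| = Σ_{i=1}^{n₁} |E_i|, |A'+A'| = Σ_{i=1}^{2n₁−1} |F_i|, and for each i ≥ 1 we have E_i + E_i ⊆ F_{2i−1} and E_i + E_i ⊆ F_{2i−2} (the latter for i ≥ 2, interpreting F_j for valid indices). -/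

import Mathlib

open Finset Pointwise

/-- Projection of `ℤ^{m+1}` away from the first coordinate. -/
def proj (m : ℕ) (x : Fin (m + 1) → ℤ) : Fin m → ℤ := fun i => x i.succ

/-- `Elevel m A i` is the set of fibers (over the projection away from the first
coordinate) of `A` having at least `i` elements. -/
def Elevel (m : ℕ) (A : Finset (Fin (m + 1) → ℤ)) (i : ℕ) : Finset (Fin m → ℤ) :=
  (A.image (proj m)).filter fun x => i ≤ (A.filter fun a => proj m a = x).card

lemma proj_eq_inj {m : ℕ} {a b : Fin (m + 1) → ℤ} (h0 : a 0 = b 0)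
    (hp : proj m a = proj m b) : a = b := by
  funext i
  refine Fin.cases h0 (fun j => congrFun hp j) i

lemma fiber_card_eq_image {m : ℕ} (A : Finset (Fin (m + 1) → ℤ)) (x : Fin m → ℤ) :
    ((A.filter fun a => proj m a = x).image (fun a => a 0)).card
      = (A.filter fun a => proj m a = x).card := by
  apply Finset.card_image_of_injOn
  intro a ha b hb hab
  simp only [mem_coe, mem_filter] at ha hb
  exact proj_eq_inj hab (ha.2.trans hb.2.symm)

/-- Layer-cake: if all fibers have size at most `N`, then `|A| = ∑_{i=1}^N |E_i|`. -/
lemma layer_cake {m : ℕ} (A : Finset (Fin (m + 1) → ℤ)) (N : ℕ)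
    (hN : ∀ x, (A.filter fun a => proj m a = x).card ≤ N) :
    A.card = ∑ i ∈ Finset.Icc 1 N, (Elevel m A i).card := by
  have h1 : ∀ i, (Elevel m A i).card
      = ∑ x ∈ A.image (proj m), if i ≤ (A.filter fun a => proj m a = x).card then 1 else 0 := by
    intro i
    rw [Elevel, Finset.card_filter]
  simp_rw [h1]
  rw [Finset.sum_comm]
  rw [Finset.card_eq_sum_card_image (proj m) A]
  refine Finset.sum_congr rfl fun x hx => ?_
  have hc := hN x
  rw [← Finset.card_filter]
  have : (Finset.Icc 1 N).filter (fun i => i ≤ (A.filter fun a => proj m a = x).card)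
      = Finset.Icc 1 ((A.filter fun a => proj m a = x).card) := by
    ext j
    simp only [mem_filter, mem_Icc]
    omega
  rw [this]
  simp [Nat.card_Icc]

lemma fiber_card_le {m : ℕ} (A : Finset (Fin (m + 1) → ℤ)) (lo hi : ℤ)
    (h : ∀ a ∈ A, lo ≤ a 0 ∧ a 0 ≤ hi) (x : Fin m → ℤ) :
    (A.filter fun a => proj m a = x).card ≤ (hi + 1 - lo).toNat := by
  rw [← fiber_card_eq_image]
  have : ((A.filter fun a => proj m a = x).image (fun a => a 0)) ⊆ Finset.Icc lo hi := by
    intro t ht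
    simp only [mem_image, mem_filter] at ht
    obtain ⟨a, ⟨haA, -⟩, rfl⟩ := ht
    simpa [mem_Icc] using h a haA
  calc _ ≤ (Finset.Icc lo hi).card := Finset.card_le_card this
    _ = (hi + 1 - lo).toNat := by rw [Int.card_Icc]

/-- Layer-cake decomposition of `|A'|` and `|A' + A'|` along fibers, together with the
containments `E_i + E_i ⊆ F_{2i-1}` and (for `i ≥ 2`) `E_i + E_i ⊆ F_{2i-2}`. -/
theorem fiber_layers (m : ℕ) (n : Fin (m + 1) → ℕ) (A' : Finset (Fin (m + 1) → ℤ))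
    (hbox : ∀ a ∈ A', ∀ i, 1 ≤ a i ∧ a i ≤ (n i : ℤ)) :
    (A'.card = ∑ i ∈ Finset.Icc 1 (n 0), (Elevel m A' i).card) ∧
    ((A' + A').card = ∑ i ∈ Finset.Icc 1 (2 * n 0 - 1), (Elevel m (A' + A') i).card) ∧
    (∀ i : ℕ, 1 ≤ i → Elevel m A' i + Elevel m A' i ⊆ Elevel m (A' + A') (2 * i - 1)) ∧
    (∀ i : ℕ, 2 ≤ i → Elevel m A' i + Elevel m A' i ⊆ Elevel m (A' + A') (2 * i - 2)) := by
  have key : ∀ i : ℕ, 1 ≤ i →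
      Elevel m A' i + Elevel m A' i ⊆ Elevel m (A' + A') (2 * i - 1) := by
    intro i hi z hz
    rw [Finset.mem_add] at hz
    obtain ⟨x, hx, y, hy, rfl⟩ := hz
    simp only [Elevel, mem_filter] at hx hy
    obtain ⟨-, hxc⟩ := hx
    obtain ⟨-, hyc⟩ := hy
    set Sx := A'.filter fun a => proj m a = x with hSx
    set Sy := A'.filter fun a => proj m a = y with hSy
    set Tx := Sx.image (fun a => a 0) with hTx
    set Ty := Sy.image (fun a => a 0) with hTy
    have hTxc : i ≤ Tx.card := by rw [hTx, fiber_card_eq_image]; exact hxc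
    have hTyc : i ≤ Ty.card := by rw [hTy, fiber_card_eq_image]; exact hyc
    have hTxne : Tx.Nonempty := Finset.card_pos.mp (lt_of_lt_of_le hi hTxc)
    have hTyne : Ty.Nonempty := Finset.card_pos.mp (lt_of_lt_of_le hi hTyc)
    have hCD : Tx.card + Ty.card - 1 ≤ (Tx + Ty).card :=
      cauchy_davenport_add_of_linearOrder_isCancelAdd hTxne hTyne
    -- the sumset of first coordinates injects into the fiber of A'+A' over x+y
    have hsub : Tx + Ty ⊆ ((A' + A').filter fun a => proj m a = x + y).image (fun a => a 0) := by
      intro t ht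
      rw [Finset.mem_add] at ht
      obtain ⟨u, hu, v, hv, rfl⟩ := ht
      simp only [hTx, hTy, mem_image] at hu hv
      obtain ⟨s, hs, rfl⟩ := hu
      obtain ⟨s', hs', rfl⟩ := hv
      simp only [hSx, hSy, mem_filter] at hs hs'
      refine Finset.mem_image.mpr ⟨s + s', ?_, rfl⟩
      refine Finset.mem_filter.mpr ⟨Finset.add_mem_add hs.1 hs'.1, ?_⟩
      funext j
      simp [proj, ← hs.2, ← hs'.2]
    have hfib : 2 * i - 1 ≤ ((A' + A').filter fun a => proj m a = x + y).card := by
      rw [← fiber_card_eq_image]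
      calc 2 * i - 1 ≤ Tx.card + Ty.card - 1 := by omega
        _ ≤ (Tx + Ty).card := hCD
        _ ≤ _ := Finset.card_le_card hsub
    have hne : ((A' + A').filter fun a => proj m a = x + y).Nonempty := by
      apply Finset.card_pos.mp
      omega
    obtain ⟨a, ha⟩ := hne
    rw [Finset.mem_filter] at ha
    refine Finset.mem_filter.mpr ⟨Finset.mem_image.mpr ⟨a, ha.1, ha.2⟩, hfib⟩
  refine ⟨?_, ?_, key, ?_⟩
  · have := layer_cake A' (n 0) (fun x => by
      have h := fiber_card_le A' 1 (n 0) (fun a ha => hbox a ha 0) x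
      simpa using h)
    exact this
  · have := layer_cake (A' + A') (2 * n 0 - 1) (fun x => by
      have hb : ∀ a ∈ A' + A', (2:ℤ) ≤ a 0 ∧ a 0 ≤ 2 * n 0 := by
        intro a ha
        rw [Finset.mem_add] at ha
        obtain ⟨u, hu, v, hv, rfl⟩ := ha
        have h1 := hbox u hu 0
        have h2 := hbox v hv 0
        constructor
        · simpa using add_le_add h1.1 h2.1
        · have := add_le_add h1.2 h2.2
          simp only [Pi.add_apply]
          omega
      have h := fiber_card_le (A' + A') 2 (2 * n 0) hb x
      have : ((2 * (n 0) : ℤ) + 1 - 2).toNat = 2 * n 0 - 1 := by omega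
      omega)
    exact this
  · intro i hi
    refine (key i (by omega)).trans ?_
    simp only [Elevel]
    intro x hx
    rw [Finset.mem_filter] at hx ⊢
    exact ⟨hx.1, by omega⟩
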